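/- The quantum relative entropy between the best possible guessed state and the final product Gibbs state equals D = −ln(Z̃/Z_St) − β Q̃, where Q̃ is the guessed quantum heat. -/

import Mathlib

open Matrix Kronecker BigOperators Finset

noncomputable section

/-- Partial trace over the bath (second tensor factor). -/
def ptraceB {n m : ℕ} (X : Matrix (Fin n × Fin m) (Fin n × Fin m) ℂ) :
    Matrix (Fin n) (Fin n) ℂ :=
  Matrix.of fun i i' => ∑ j, X (i, j) (i', j)

/-- Outer product `|v⟩⟨v|`. -/
def outer {k : ℕ} (v : Fin k → ℂ) : Matrix (Fin k) (Fin k) ℂ :=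
  Matrix.vecMulVec v (star v)

/-- Partition function `Z = Tr exp (−β H)` (real part of the trace). -/
def Zpart (β : ℝ) {k : ℕ} (H : Matrix (Fin k) (Fin k) ℂ) : ℝ :=
  (NormedSpace.exp ((-β) • H)).trace.re

/-- Gibbs state `exp (−β H) / Z`. -/
def gibbs (β : ℝ) {k : ℕ} (H : Matrix (Fin k) (Fin k) ℂ) : Matrix (Fin k) (Fin k) ℂ :=
  ((Zpart β H : ℂ)⁻¹) • NormedSpace.exp ((-β) • H)

/-- The channel `Φ(ρ) = Tr_B [U (ρ ⊗ τB) U†]`. -/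
def channel {n m : ℕ} (U : Matrix (Fin n × Fin m) (Fin n × Fin m) ℂ)
    (τB : Matrix (Fin m) (Fin m) ℂ) (ρ : Matrix (Fin n) (Fin n) ℂ) :
    Matrix (Fin n) (Fin n) ℂ :=
  ptraceB (U * (ρ ⊗ₖ τB) * Uᴴ)

lemma exp_decomp {k : ℕ} (β : ℝ) (H : Matrix (Fin k) (Fin k) ℂ)
    (f : Fin k → Fin k → ℂ) (q : Fin k → ℝ)
    (hf : ∀ j j', ∑ x, (starRingEnd ℂ) (f j x) * f j' x = if j = j' then 1 else 0)
    (hfeig : ∀ j, H *ᵥ f j = (q j : ℂ) • f j) :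
    (NormedSpace.exp ((-β) • H)).trace = ((∑ j, Real.exp (-(β * q j)) : ℝ) : ℂ) ∧
    (H * NormedSpace.exp ((-β) • H)).trace = ((∑ j, q j * Real.exp (-(β * q j)) : ℝ) : ℂ) := by
  set F : Matrix (Fin k) (Fin k) ℂ := Matrix.of fun x j => f j x with hF
  have hFinv : Fᴴ * F = 1 := by
    ext j j'
    simpa [Matrix.mul_apply, Matrix.conjTranspose_apply, hF, Matrix.one_apply] using hf j j'
  have hFinv2 : F * Fᴴ = 1 := mul_eq_one_comm.mp hFinv
  have hUnit : IsUnit F := ⟨⟨F, Fᴴ, hFinv2, hFinv⟩, rfl⟩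
  have hInv : F⁻¹ = Fᴴ := Matrix.inv_eq_left_inv hFinv
  have hHF : H * F = F * Matrix.diagonal (fun j => (q j : ℂ)) := by
    ext x j
    have := congrFun (hfeig j) x
    simpa [Matrix.mul_apply, Matrix.mulVec, dotProduct, hF, Matrix.diagonal,
      mul_comm] using this
  have hdiag : (-β) • (Matrix.diagonal fun j => ((q j : ℂ))) =
      Matrix.diagonal (fun j => ((-(β * q j) : ℝ) : ℂ)) := by
    ext i j
    rw [Matrix.smul_apply]
    by_cases h : i = j
    · subst h; simp only [Matrix.diagonal_apply_eq, Complex.real_smul]; push_cast; ring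
    · simp [Matrix.diagonal_apply_ne _ h]
  have hH : H = F * Matrix.diagonal (fun j => (q j : ℂ)) * Fᴴ := by
    calc H = H * (F * Fᴴ) := by rw [hFinv2, Matrix.mul_one]
    _ = (H * F) * Fᴴ := by rw [Matrix.mul_assoc]
    _ = _ := by rw [hHF]
  have hsmul : (-β) • H = F * Matrix.diagonal (fun j => ((-(β * q j) : ℝ) : ℂ)) * F⁻¹ := by
    rw [hInv, hH, ← hdiag, Matrix.mul_smul, Matrix.smul_mul]
  have hpexp : (NormedSpace.exp fun j => ((-(β * q j) : ℝ) : ℂ)) =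
      fun j => (Real.exp (-(β * q j)) : ℂ) := by
    funext j
    rw [Pi.coe_exp, ← Complex.exp_eq_exp_ℂ, ← Complex.ofReal_exp]
  have hexp : NormedSpace.exp ((-β) • H)
      = F * Matrix.diagonal (fun j => (Real.exp (-(β * q j)) : ℂ)) * Fᴴ := by
    rw [hsmul, Matrix.exp_conj F _ hUnit, Matrix.exp_diagonal, hInv, hpexp]
  constructor
  · rw [hexp, Matrix.trace_mul_cycle, hFinv, Matrix.one_mul, Matrix.trace_diagonal]
    push_cast
    ring
  · have : H * NormedSpace.exp ((-β) • H)
        = F * Matrix.diagonal (fun j => ((q j : ℂ) * (Real.exp (-(β * q j)) : ℂ))) * Fᴴ := by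
      rw [hexp, ← Matrix.mul_assoc, ← Matrix.mul_assoc, hHF, Matrix.mul_assoc F,
        Matrix.diagonal_mul_diagonal]
    rw [this, Matrix.trace_mul_cycle, hFinv, Matrix.one_mul, Matrix.trace_diagonal]
    push_cast
    ring

lemma trace_kron_one {n m : ℕ} (A : Matrix (Fin n) (Fin n) ℂ)
    (X : Matrix (Fin n × Fin m) (Fin n × Fin m) ℂ) :
    ((A ⊗ₖ (1 : Matrix (Fin m) (Fin m) ℂ)) * X).trace = (A * ptraceB X).trace := by
  simp only [Matrix.trace, Matrix.diag, Matrix.mul_apply, ptraceB, Matrix.of_apply,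
    Fintype.sum_prod_type, Matrix.kroneckerMap_apply, Matrix.one_apply, mul_ite, mul_one,
    mul_zero, ite_mul, zero_mul, Finset.sum_ite_eq, Finset.mul_sum, Finset.mem_univ, if_true]
  exact Finset.sum_congr rfl fun i _ => Finset.sum_comm

lemma Zpart_pos {k : ℕ} (hk : 1 ≤ k) (β : ℝ) {H : Matrix (Fin k) (Fin k) ℂ}
    (hH : H.IsHermitian) : 0 < Zpart β H := by
  have horth : ∀ j j', ∑ x, (starRingEnd ℂ) (hH.eigenvectorBasis j x) * hH.eigenvectorBasis j' x
      = if j = j' then 1 else 0 := by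
    intro j j'
    have := (orthonormal_iff_ite.mp hH.eigenvectorBasis.orthonormal) j j'
    simpa [PiLp.inner_apply, RCLike.inner_apply, mul_comm] using this
  have heig : ∀ j, H *ᵥ (hH.eigenvectorBasis j) = ((hH.eigenvalues j : ℝ) : ℂ) • ⇑(hH.eigenvectorBasis j) := by
    intro j
    funext x
    have := congrFun (hH.mulVec_eigenvectorBasis j) x
    simpa [Complex.real_smul] using this
  have h := (exp_decomp β H (fun j x => hH.eigenvectorBasis j x) hH.eigenvalues horth heig).1
  rw [Zpart, h, Complex.ofReal_re]
  have : Nonempty (Fin k) := ⟨⟨0, hk⟩⟩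
  exact Finset.sum_pos (fun _ _ => Real.exp_pos _) Finset.univ_nonempty

theorem relative_entropy_guessed_heat
    (n m : ℕ) (hn : 1 ≤ n) (hm : 1 ≤ m)
    (β : ℝ) (hβ : 0 < β)
    (HS0 HSt : Matrix (Fin n) (Fin n) ℂ)
    (hHS0 : HS0.IsHermitian) (hHSt : HSt.IsHermitian)
    (HB : Matrix (Fin m) (Fin m) ℂ) (hHB : HB.IsHermitian)
    (e : Fin n → Fin n → ℂ) (ε : Fin n → ℝ)
    (he : ∀ i i', ∑ x, (starRingEnd ℂ) (e i x) * e i' x = if i = i' then 1 else 0)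
    (heig : ∀ i, HS0 *ᵥ e i = (ε i : ℂ) • e i)
    (f : Fin m → Fin m → ℂ) (q : Fin m → ℝ)
    (hf : ∀ j j', ∑ x, (starRingEnd ℂ) (f j x) * f j' x = if j = j' then 1 else 0)
    (hfeig : ∀ j, HB *ᵥ f j = (q j : ℂ) • f j)
    (U : Matrix (Fin n × Fin m) (Fin n × Fin m) ℂ)
    (hU : U ∈ Matrix.unitaryGroup (Fin n × Fin m) ℂ)
    (E : Fin n → ℝ)
    (hE : ∀ i, E i = ((HSt * channel U (gibbs β HB) (outer (e i))).trace).re)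
    (Zt : ℝ) (hZt : Zt = ∑ i, Real.exp (-(β * E i)))
    (p : Fin n → ℝ) (hp : ∀ i, p i = Real.exp (-(β * E i)) / Zt)
    (Θ : Matrix (Fin n × Fin m) (Fin n × Fin m) ℂ)
    (hΘ : Θ = ∑ i, (p i : ℂ) • (U * (outer (e i) ⊗ₖ gibbs β HB) * Uᴴ))
    (lam : Fin n → Fin m → ℝ)
    (hlam : ∀ i j, lam i j = p i * Real.exp (-(β * q j)) / Zpart β HB)
    (Qg : ℝ)
    (hQg : Qg = ((HB * gibbs β HB).trace).re
      - ((((1 : Matrix (Fin n) (Fin n) ℂ) ⊗ₖ HB) * Θ).trace).re)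
    (D : ℝ)
    (hD : D = (∑ i, ∑ j, lam i j * Real.log (lam i j))
      + β * (((HSt ⊗ₖ (1 : Matrix (Fin m) (Fin m) ℂ)) * Θ).trace).re
      + β * ((((1 : Matrix (Fin n) (Fin n) ℂ) ⊗ₖ HB) * Θ).trace).re
      + Real.log (Zpart β HSt * Zpart β HB)) :
    D = -Real.log (Zt / Zpart β HSt) - β * Qg := by
  have hkey := exp_decomp β HB f q hf hfeig
  set ZB := Zpart β HB with hZBdef
  set ZS := Zpart β HSt with hZSdef
  have hZB : ZB = ∑ j, Real.exp (-(β * q j)) := by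
    rw [hZBdef, Zpart, hkey.1, Complex.ofReal_re]
  have hZBpos : 0 < ZB := by
    rw [hZB]
    have : Nonempty (Fin m) := ⟨⟨0, hm⟩⟩
    exact Finset.sum_pos (fun _ _ => Real.exp_pos _) Finset.univ_nonempty
  have hZSpos : 0 < ZS := Zpart_pos hn β hHSt
  have hZtpos : 0 < Zt := by
    rw [hZt]
    have : Nonempty (Fin n) := ⟨⟨0, hn⟩⟩
    exact Finset.sum_pos (fun _ _ => Real.exp_pos _) Finset.univ_nonempty
  have hppos : ∀ i, 0 < p i := by
    intro i; rw [hp]; positivity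
  have hpsum : ∑ i, p i = 1 := by
    rw [show (∑ i, p i) = (∑ i, Real.exp (-(β * E i))) / Zt by
      rw [Finset.sum_div]; exact Finset.sum_congr rfl fun i _ => (hp i)]
    rw [← hZt, div_self hZtpos.ne']
  set W := ∑ j, q j * Real.exp (-(β * q j)) with hW
  -- first Qg term
  have hTB : ((HB * gibbs β HB).trace).re = W / ZB := by
    rw [gibbs, Matrix.mul_smul, Matrix.trace_smul, hkey.2, smul_eq_mul, ← hZBdef,
      ← Complex.ofReal_inv, ← Complex.ofReal_mul, Complex.ofReal_re]
    exact inv_mul_eq_div _ _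
  -- system energy term
  have hT1 : (((HSt ⊗ₖ (1 : Matrix (Fin m) (Fin m) ℂ)) * Θ).trace).re = ∑ i, p i * E i := by
    rw [hΘ, Finset.mul_sum, Matrix.trace_sum]
    rw [Complex.re_sum]
    refine Finset.sum_congr rfl fun i _ => ?_
    rw [Matrix.mul_smul, Matrix.trace_smul, smul_eq_mul, trace_kron_one,
      Complex.re_ofReal_mul, hE i]
    rfl
  -- log identities
  have hlogp : ∀ i, Real.log (p i) = -(β * E i) - Real.log Zt := by
    intro i
    rw [hp, Real.log_div (Real.exp_ne_zero _) hZtpos.ne', Real.log_exp]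
  have hinner : ∀ i, ∑ j, lam i j * Real.log (lam i j)
      = p i * Real.log (p i) - (β * (W / ZB)) * p i - Real.log ZB * p i := by
    intro i
    have hterm : ∀ j, lam i j * Real.log (lam i j)
        = (p i * Real.log (p i)) * (Real.exp (-(β * q j)) / ZB)
          - (β * p i / ZB) * (q j * Real.exp (-(β * q j)))
          - (p i * Real.log ZB) * (Real.exp (-(β * q j)) / ZB) := by
      intro j
      rw [hlam, Real.log_div (mul_ne_zero (hppos i).ne' (Real.exp_ne_zero _)) hZBpos.ne',
        Real.log_mul (hppos i).ne' (Real.exp_ne_zero _), Real.log_exp]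
      field_simp
      ring
    rw [Finset.sum_congr rfl fun j _ => hterm j]
    rw [Finset.sum_sub_distrib, Finset.sum_sub_distrib, ← Finset.mul_sum, ← Finset.mul_sum,
      ← Finset.mul_sum]
    have hone : ∑ j, Real.exp (-(β * q j)) / ZB = 1 := by
      rw [← Finset.sum_div, ← hZB, div_self hZBpos.ne']
    rw [hone, mul_one, mul_one, ← hW]
    field_simp
  have hplogp : ∑ i, p i * Real.log (p i) = -(β * (∑ i, p i * E i)) - Real.log Zt := by
    have h1 : ∀ i, p i * Real.log (p i) = (-β) * (p i * E i) + (-Real.log Zt) * p i := by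
      intro i; rw [hlogp i]; ring
    rw [Finset.sum_congr rfl fun i _ => h1 i, Finset.sum_add_distrib, ← Finset.mul_sum,
      ← Finset.mul_sum, hpsum]
    ring
  have hsum : (∑ i, ∑ j, lam i j * Real.log (lam i j))
      = (∑ i, p i * Real.log (p i)) - β * (W / ZB) - Real.log ZB := by
    rw [Finset.sum_congr rfl fun i _ => hinner i, Finset.sum_sub_distrib, Finset.sum_sub_distrib,
      ← Finset.mul_sum, ← Finset.mul_sum, hpsum, mul_one, mul_one]
  rw [hD, hQg, hTB, hT1, hsum, hplogp, Real.log_mul hZSpos.ne' hZBpos.ne',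
    Real.log_div hZtpos.ne' hZSpos.ne']
  ring
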